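/- Over a three-letter alphabet {a, b, c}, the only 3-anti-power words are the word abcab, the words obtained from abcab by permuting the letters, and the factors of these words; in particular, every 3-anti-power word over a three-letter alphabet has length at most 5. -/

import Mathlib

/-- A word `u` contains a square `xx` (x nonempty) iff it is not square-free. -/
def SquareFree {B : Type*} (w : List B) : Prop :=
  ∀ u : List B, u ≠ [] → ¬ (u ++ u) <:+: w

/-- `w` is a (k,n)-anti-power sequence: a concatenation of `k` pairwise
distinct words, each of length `n`. -/
def AntiPowerSeq {B : Type*} (k n : ℕ) (w : List B) : Prop :=
  ∃ l : List (List B), l.length = k ∧ (∀ u ∈ l, u.length = n) ∧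
    l.Pairwise (· ≠ ·) ∧ w = l.flatten

/-- `AntiPowerWord k w`: a 2-anti-power word is a square-free word; for `k ≥ 3`,
a `k`-anti-power word is a `(k-1)`-anti-power word each of whose factors of
length `k·ℓ` (for `1 ≤ ℓ ≤ ⌊|w|/k⌋`) is a `(k,ℓ)`-anti-power sequence. -/
def AntiPowerWord {B : Type*} : ℕ → List B → Prop
  | 0, _ => True
  | 1, _ => True
  | 2, w => SquareFree w
  | k + 3, w => AntiPowerWord (k + 2) w ∧
      ∀ ℓ : ℕ, 1 ≤ ℓ → ℓ ≤ w.length / (k + 3) →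
        ∀ u : List B, u <:+: w → u.length = (k + 3) * ℓ → AntiPowerSeq (k + 3) ℓ u

/-- The action on words of the morphism `f : A* → B*` determined by its
values on letters. -/
def Morph.apply {A B : Type*} (f : A → List B) (w : List A) : List B :=
  (w.map f).flatten


section Aux
variable {A : Type*} {a b c : A}

lemma third (hab : a ≠ b) (hac : a ≠ c) (hbc : b ≠ c)
    (hA : ∀ x : A, x = a ∨ x = b ∨ x = c) :
    ∀ x y : A, x ≠ y → ∃ z, z ≠ x ∧ z ≠ y ∧ ∀ t, t ≠ x → t ≠ y → t = z := by
  intro x y hxy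
  have key : ∀ z t : A, z ≠ x → z ≠ y → t ≠ x → t ≠ y → t = z := by
    intro z t hzx hzy htx hty
    rcases hA z with rfl | rfl | rfl <;> rcases hA t with rfl | rfl | rfl <;>
      rcases hA x with rfl | rfl | rfl <;> rcases hA y with rfl | rfl | rfl <;> tauto
  obtain ⟨z, hz1, hz2⟩ : ∃ z : A, z ≠ x ∧ z ≠ y := by
    rcases hA x with rfl | rfl | rfl <;> rcases hA y with rfl | rfl | rfl <;>
      first
        | exact absurd rfl hxy
        | exact ⟨a, by tauto, by tauto⟩
        | exact ⟨b, by tauto, by tauto⟩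
        | exact ⟨c, by tauto, by tauto⟩
  exact ⟨z, hz1, hz2, fun t => key z t hz1 hz2⟩

lemma eq4 (hab : a ≠ b) (hac : a ≠ c) (hbc : b ≠ c)
    (hA : ∀ x : A, x = a ∨ x = b ∨ x = c) :
    ∀ p q r s : A, p ≠ q → p ≠ r → q ≠ r → s ≠ q → s ≠ r → s = p := by
  intro p q r s hpq hpr hqr hsq hsr
  obtain ⟨z, _, _, hu⟩ := third hab hac hbc hA q r hqr
  exact (hu s hsq hsr).trans (hu p hpq hpr).symm

lemma perm_exists (hab : a ≠ b) (hac : a ≠ c) (hbc : b ≠ c)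
    (hA : ∀ x : A, x = a ∨ x = b ∨ x = c) :
    ∀ x y z : A, x ≠ y → x ≠ z → y ≠ z →
      ∃ σ : Equiv.Perm A, σ a = x ∧ σ b = y ∧ σ c = z := by
  classical
  intro x y z hxy hxz hyz
  have hfin : Finite A := Finite.of_surjective (fun i : Fin 3 => ![a, b, c] i)
    (by intro t; rcases hA t with rfl | rfl | rfl
        exacts [⟨0, rfl⟩, ⟨1, rfl⟩, ⟨2, rfl⟩])
  set f : A → A := fun t => if t = a then x else if t = b then y else z with hf
  have hfa : f a = x := by simp [hf]
  have hfb : f b = y := by simp [hf, hab.symm]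
  have hfc : f c = z := by simp [hf, hac.symm, hbc.symm]
  have hinj : Function.Injective f := by
    intro s t h
    clear hf
    rcases hA s with rfl | rfl | rfl <;> rcases hA t with rfl | rfl | rfl <;> simp_all
  exact ⟨Equiv.ofBijective f (Finite.injective_iff_bijective.mp hinj), hfa, hfb, hfc⟩

lemma model_sf {x y z : A} (hxy : x ≠ y) (hxz : x ≠ z) (hyz : y ≠ z) :
    SquareFree [x, y, z, x, y] := by
  rintro u hu ⟨s, t, h⟩
  rcases u with _ | ⟨p, _ | ⟨q, _ | ⟨r, u⟩⟩⟩
  · exact hu rfl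
  · rcases s with _ | ⟨s0, _ | ⟨s1, _ | ⟨s2, _ | ⟨s3, s⟩⟩⟩⟩
    · simp at h; exact hxy (h.1.symm.trans h.2.1)
    · simp at h; exact hyz (h.2.1.symm.trans h.2.2.1)
    · simp at h; exact hxz (h.2.2.2.1.symm.trans h.2.2.1)
    · simp at h; exact hxy (h.2.2.2.1.symm.trans h.2.2.2.2.1)
    · apply_fun List.length at h; simp at h; omega
  · rcases s with _ | ⟨s0, _ | ⟨s1, s⟩⟩
    · simp at h; exact hxz (h.1.symm.trans h.2.2.1)
    · simp at h; exact hxy (h.2.2.2.1.symm.trans h.2.1)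
    · apply_fun List.length at h; simp at h; omega
  · apply_fun List.length at h; simp at h; omega

lemma model_fac3 {x y z : A} (hxy : x ≠ y) (hxz : x ≠ z) (hyz : y ≠ z) :
    ∀ u : List A, u <:+: [x, y, z, x, y] → u.length = 3 →
      ∃ p q r, u = [p, q, r] ∧ p ≠ q ∧ p ≠ r ∧ q ≠ r := by
  rintro u ⟨s, t, h⟩ hlen
  rcases u with _ | ⟨p, _ | ⟨q, _ | ⟨r, _ | ⟨w, u⟩⟩⟩⟩ <;> simp at hlen
  rcases s with _ | ⟨s0, _ | ⟨s1, _ | ⟨s2, s⟩⟩⟩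
  · simp at h
    obtain ⟨rfl, rfl, rfl, -⟩ := h
    exact ⟨_, _, _, rfl, hxy, hxz, hyz⟩
  · simp at h
    obtain ⟨-, rfl, rfl, rfl, -⟩ := h
    exact ⟨_, _, _, rfl, hyz, hxy.symm, hxz.symm⟩
  · simp at h
    obtain ⟨-, -, rfl, rfl, rfl, -⟩ := h
    exact ⟨_, _, _, rfl, hxz.symm, hyz.symm, hxy⟩
  · apply_fun List.length at h; simp at h; omega

lemma aps_one {u : List A} (h : AntiPowerSeq 3 1 u) :
    ∃ p q r, u = [p, q, r] ∧ p ≠ q ∧ p ≠ r ∧ q ≠ r := by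
  obtain ⟨l, hl, hone, hpw, rfl⟩ := h
  rcases l with _ | ⟨u0, _ | ⟨u1, _ | ⟨u2, _ | ⟨u3, l⟩⟩⟩⟩ <;> simp at hl
  obtain ⟨p, rfl⟩ := List.length_eq_one_iff.mp (hone u0 (by simp))
  obtain ⟨q, rfl⟩ := List.length_eq_one_iff.mp (hone u1 (by simp))
  obtain ⟨r, rfl⟩ := List.length_eq_one_iff.mp (hone u2 (by simp))
  simp [List.pairwise_cons] at hpw
  exact ⟨p, q, r, rfl, hpw.1.1, hpw.1.2, hpw.2⟩

lemma aps_one' {p q r : A} (hpq : p ≠ q) (hpr : p ≠ r) (hqr : q ≠ r) :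
    AntiPowerSeq 3 1 [p, q, r] :=
  ⟨[[p], [q], [r]], rfl, by simp, by simp [List.pairwise_cons, hpq, hpr, hqr], rfl⟩

end Aux


/-- Over a three-letter alphabet `{a, b, c}`, the only
3-anti-power words are `abcab`, the words obtained from it by permuting the
letters, and the factors of these words; in particular every 3-anti-power word
has length at most `5`. -/
theorem antiPower_three_letters
    {A : Type*} (a b c : A) (hab : a ≠ b) (hac : a ≠ c) (hbc : b ≠ c)
    (hA : ∀ x : A, x = a ∨ x = b ∨ x = c) :
    ∀ w : List A,
      (AntiPowerWord 3 w ↔ ∃ σ : Equiv.Perm A, w <:+: ([a, b, c, a, b].map σ)) ∧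
      (AntiPowerWord 3 w → w.length ≤ 5) := by
  have model_mem : ∀ x y z : A, x ≠ y → x ≠ z → y ≠ z →
      ∀ w : List A, w <:+: [x, y, z, x, y] →
      ∃ σ : Equiv.Perm A, w <:+: ([a, b, c, a, b].map σ) := by
    intro x y z hxy hxz hyz w hw
    obtain ⟨σ, h1, h2, h3⟩ := perm_exists hab hac hbc hA x y z hxy hxz hyz
    exact ⟨σ, by simpa [h1, h2, h3] using hw⟩
  intro w
  have unf : AntiPowerWord 3 w ↔ (SquareFree w ∧
      ∀ ℓ : ℕ, 1 ≤ ℓ → ℓ ≤ w.length / 3 →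
        ∀ u : List A, u <:+: w → u.length = 3 * ℓ → AntiPowerSeq 3 ℓ u) := Iff.rfl
  have main : AntiPowerWord 3 w ↔ ∃ σ : Equiv.Perm A, w <:+: ([a, b, c, a, b].map σ) := by
    rw [unf]
    constructor
    · rintro ⟨hsf, hAP⟩
      have fac3 : ∀ p q r : A, [p, q, r] <:+: w → p ≠ q ∧ p ≠ r ∧ q ≠ r := by
        intro p q r hu
        have h3 : 3 ≤ w.length := by simpa using hu.length_le
        obtain ⟨p', q', r', he, h1, h2, h3'⟩ :=
          aps_one (hAP 1 le_rfl (by omega) [p, q, r] hu (by simp))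
        simp only [List.cons.injEq] at he
        obtain ⟨rfl, rfl, rfl, -⟩ := he
        exact ⟨h1, h2, h3'⟩
      have hlen : w.length ≤ 5 := by
        by_contra hlong
        push_neg at hlong
        rcases w with _ | ⟨x0, _ | ⟨x1, _ | ⟨x2, _ | ⟨x3, _ | ⟨x4, _ | ⟨x5, rest⟩⟩⟩⟩⟩⟩ <;>
          simp at hlong
        have h0 := fac3 x0 x1 x2 ⟨[], x3 :: x4 :: x5 :: rest, rfl⟩
        have h1 := fac3 x1 x2 x3 ⟨[x0], x4 :: x5 :: rest, rfl⟩
        have h2 := fac3 x2 x3 x4 ⟨[x0, x1], x5 :: rest, rfl⟩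
        have h3 := fac3 x3 x4 x5 ⟨[x0, x1, x2], rest, rfl⟩
        have e3 : x3 = x0 :=
          eq4 hab hac hbc hA x0 x1 x2 x3 h0.1 h0.2.1 h0.2.2 h1.2.1.symm h1.2.2.symm
        have e4 : x4 = x1 :=
          eq4 hab hac hbc hA x1 x2 x3 x4 h1.1 h1.2.1 h1.2.2 h2.2.1.symm h2.2.2.symm
        have e5 : x5 = x2 :=
          eq4 hab hac hbc hA x2 x3 x4 x5 h2.1 h2.2.1 h2.2.2 h3.2.1.symm h3.2.2.symm
        exact hsf [x0, x1, x2] (by simp)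
          ⟨[], rest, by rw [e3, e4, e5]; rfl⟩
      rcases w with _ | ⟨x0, _ | ⟨x1, _ | ⟨x2, _ | ⟨x3, _ | ⟨x4, _ | ⟨x5, rest⟩⟩⟩⟩⟩⟩
      · exact model_mem a b c hab hac hbc [] List.nil_infix
      · obtain ⟨y, hy⟩ : ∃ y, y ≠ x0 := by
          rcases hA x0 with h | h | h
          · exact ⟨b, by rw [h]; exact hab.symm⟩
          · exact ⟨a, by rw [h]; exact hab⟩
          · exact ⟨a, by rw [h]; exact hac⟩
        obtain ⟨z, hz1, hz2, -⟩ := third hab hac hbc hA y x0 hy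
        exact model_mem x0 y z hy.symm hz2.symm hz1.symm [x0] ⟨[], [y, z, x0, y], rfl⟩
      · have hxy : x0 ≠ x1 := by
          intro he
          exact hsf [x0] (by simp) ⟨[], [], by rw [he]; rfl⟩
        obtain ⟨z, hz1, hz2, -⟩ := third hab hac hbc hA x0 x1 hxy
        exact model_mem x0 x1 z hxy hz1.symm hz2.symm [x0, x1] ⟨[], [z, x0, x1], rfl⟩
      · have h0 := fac3 x0 x1 x2 (List.infix_refl _)
        exact model_mem x0 x1 x2 h0.1 h0.2.1 h0.2.2 [x0, x1, x2] ⟨[], [x0, x1], rfl⟩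
      · have h0 := fac3 x0 x1 x2 ⟨[], [x3], rfl⟩
        have h1 := fac3 x1 x2 x3 ⟨[x0], [], rfl⟩
        have e3 : x3 = x0 :=
          eq4 hab hac hbc hA x0 x1 x2 x3 h0.1 h0.2.1 h0.2.2 h1.2.1.symm h1.2.2.symm
        exact model_mem x0 x1 x2 h0.1 h0.2.1 h0.2.2 [x0, x1, x2, x3] ⟨[], [x1], by rw [e3]; rfl⟩
      · have h0 := fac3 x0 x1 x2 ⟨[], [x3, x4], rfl⟩
        have h1 := fac3 x1 x2 x3 ⟨[x0], [x4], rfl⟩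
        have h2 := fac3 x2 x3 x4 ⟨[x0, x1], [], rfl⟩
        have e3 : x3 = x0 :=
          eq4 hab hac hbc hA x0 x1 x2 x3 h0.1 h0.2.1 h0.2.2 h1.2.1.symm h1.2.2.symm
        have e4 : x4 = x1 :=
          eq4 hab hac hbc hA x1 x2 x3 x4 h1.1 h1.2.1 h1.2.2 h2.2.1.symm h2.2.2.symm
        exact model_mem x0 x1 x2 h0.1 h0.2.1 h0.2.2 [x0, x1, x2, x3, x4]
          ⟨[], [], by rw [e3, e4]; rfl⟩
      · simp at hlen; omega
    · rintro ⟨σ, hw⟩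
      have hw' : w <:+: [σ a, σ b, σ c, σ a, σ b] := by simpa using hw
      have d1 : σ a ≠ σ b := fun h => hab (σ.injective h)
      have d2 : σ a ≠ σ c := fun h => hac (σ.injective h)
      have d3 : σ b ≠ σ c := fun h => hbc (σ.injective h)
      refine ⟨fun u hu hsq => model_sf d1 d2 d3 u hu (hsq.trans hw'), ?_⟩
      intro ℓ hℓ1 hℓ2 u hu hulen
      have hw5 : w.length ≤ 5 := by simpa using hw'.length_le
      have hℓ : ℓ = 1 := by omega
      subst hℓ
      obtain ⟨p, q, r, rfl, h1, h2, h3⟩ :=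
        model_fac3 d1 d2 d3 u (hu.trans hw') (by simpa using hulen)
      exact aps_one' h1 h2 h3
  exact ⟨main, fun h => by
    obtain ⟨σ, hw⟩ := main.mp h
    simpa using hw.length_le⟩
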